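/- (Burns–Hale theorem) A group G is left-orderable if and only if for every finitely generated subgroup H ≠ {1} of G there exist a left-orderable group L and a nontrivial group homomorphism H → L. -/

import Mathlib

universe u

/-- A group is left-orderable if it admits a strict linear order invariant under
left multiplication. -/
def LeftOrderable (G : Type*) [Group G] : Prop :=
  ∃ r : G → G → Prop, IsStrictTotalOrder G r ∧ ∀ f g h : G, r g h → r (f * g) (f * h)

section Aux

variable {G : Type u} [Group G]

/-- The set of signed generators. -/
def sgnSet (ε : G → Bool) (S : Finset G) : Set G :=
  {x | ∃ g ∈ S, x = cond (ε g) g g⁻¹}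

/-- `ε` is a good sign assignment for `S` if `1` is not in the subsemigroup generated. -/
def Good (ε : G → Bool) (S : Finset G) : Prop :=
  (1 : G) ∉ Subsemigroup.closure (sgnSet ε S)

theorem sgnSet_congr {ε ε' : G → Bool} {S : Finset G} (h : ∀ g ∈ S, ε g = ε' g) :
    sgnSet ε S = sgnSet ε' S := by
  ext x
  constructor <;> rintro ⟨g, hg, rfl⟩ <;> exact ⟨g, hg, by rw [h g hg]⟩

theorem sgnSet_mono {ε : G → Bool} {S T : Finset G} (h : S ⊆ T) :
    sgnSet ε S ⊆ sgnSet ε T := by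
  rintro x ⟨g, hg, rfl⟩; exact ⟨g, h hg, rfl⟩

theorem exists_good
    (hyp : ∀ H : Subgroup G, H.FG → H ≠ ⊥ →
      ∃ (L : Type u) (_ : Group L), LeftOrderable L ∧ ∃ f : H →* L, ∃ h : H, f h ≠ 1) :
    ∀ S : Finset G, (1 : G) ∉ S → ∃ ε : G → Bool, Good ε S := by
  classical
  intro S
  induction S using Finset.strongInduction with
  | _ S IH =>
  intro h1S
  rcases S.eq_empty_or_nonempty with rfl | ⟨g₀, hg₀⟩
  · exact ⟨fun _ => true, by
      simp only [Good, sgnSet]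
      intro h
      simp only [Finset.notMem_empty, false_and, exists_false,
        Set.setOf_false] at h
      rw [Subsemigroup.closure_empty] at h
      exact h⟩
  · set H : Subgroup G := Subgroup.closure (S : Set G) with hH
    have hFG : H.FG := ⟨S, rfl⟩
    have hne : H ≠ ⊥ := by
      rw [Subgroup.ne_bot_iff_exists_ne_one]
      refine ⟨⟨g₀, Subgroup.subset_closure hg₀⟩, ?_⟩
      simp only [ne_eq, Subgroup.mk_eq_one]
      exact fun h => h1S (h ▸ hg₀)
    obtain ⟨L, _, ⟨r, hsto, hinv⟩, f, h, hfh⟩ := hyp H hFG hne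
    have posinv : ∀ x : L, x ≠ 1 → ¬ r 1 x → r 1 x⁻¹ := by
      intro x hx hrx
      rcases (haveI := hsto; trichotomous_of (r := r) 1 x) with h' | h' | h'
      · exact absurd h' hrx
      · exact absurd h'.symm hx
      · have := hinv x⁻¹ x 1 h'
        simpa using this
    have posmul : ∀ x y : L, r 1 x → r 1 y → r 1 (x * y) := by
      intro x y hx hy
      have := hinv x 1 y hy
      rw [mul_one] at this
      exact hsto.trans _ _ _ hx this
    -- the trivially-mapped generators
    set S₁ : Finset G := S.filter (fun g => ∀ hg : g ∈ H, f ⟨g, hg⟩ = 1) with hS₁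
    have hS₁sub : S₁ ⊆ S := Finset.filter_subset _ _
    have hS₁ne : S₁ ≠ S := by
      intro hEq
      -- then f kills all generators, hence is trivial
      have hker : (⊤ : Subgroup H) ≤ f.ker := by
        rw [← Subgroup.closure_preimage_eq_top (S : Set G)]
        rw [Subgroup.closure_le]
        rintro ⟨x, hx⟩ hxS
        simp only [Set.mem_preimage, Subgroup.coe_subtype] at hxS
        have : x ∈ S₁ := hEq ▸ hxS
        rw [hS₁, Finset.mem_filter] at this
        exact this.2 hx
      exact hfh (hker (Subgroup.mem_top h))
    have hS₁ssub : S₁ ⊂ S := lt_of_le_of_ne hS₁sub hS₁ne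
    obtain ⟨ε₁, hε₁⟩ := IH S₁ hS₁ssub (fun h => h1S (hS₁sub h))
    -- define the new sign assignment
    set ε : G → Bool := fun g =>
      if hg : g ∈ H then
        (if f ⟨g, hg⟩ = 1 then ε₁ g else (if r 1 (f ⟨g, hg⟩) then true else false))
      else ε₁ g with hε
    refine ⟨ε, ?_⟩
    intro hmem
    have key : ∀ (x : G) (hx : x ∈ Subsemigroup.closure (sgnSet ε S)),
        ∃ hxH : x ∈ H, r 1 (f ⟨x, hxH⟩) ∨
          (f ⟨x, hxH⟩ = 1 ∧ x ∈ Subsemigroup.closure (sgnSet ε₁ S₁)) := by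
      intro x hx
      induction hx using Subsemigroup.closure_induction with
      | mem x hxs =>
        obtain ⟨g, hgS, hxeq⟩ := hxs
        have hgH : g ∈ H := Subgroup.subset_closure hgS
        have hgiH : g⁻¹ ∈ H := inv_mem hgH
        have hfinv : f ⟨g⁻¹, hgiH⟩ = (f ⟨g, hgH⟩)⁻¹ := by rw [← map_inv]; rfl
        by_cases htriv : f ⟨g, hgH⟩ = 1
        · have hgS₁ : g ∈ S₁ := by
            rw [hS₁, Finset.mem_filter]
            exact ⟨hgS, fun hg => htriv⟩
          have hεg : ε g = ε₁ g := by
            rw [hε]; simp only [dif_pos hgH, if_pos htriv]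
          have hs : x ∈ Subsemigroup.closure (sgnSet ε₁ S₁) :=
            Subsemigroup.subset_closure ⟨g, hgS₁, by rw [← hεg]; exact hxeq⟩
          cases hb : ε g with
          | true =>
            rw [hb, cond_true] at hxeq; subst hxeq
            exact ⟨hgH, Or.inr ⟨htriv, hs⟩⟩
          | false =>
            rw [hb, cond_false] at hxeq; subst hxeq
            exact ⟨hgiH, Or.inr ⟨by rw [hfinv, htriv, inv_one], hs⟩⟩
        · have hεg : ε g = (if r 1 (f ⟨g, hgH⟩) then true else false) := by
            rw [hε]; simp only [dif_pos hgH, if_neg htriv]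
          by_cases hr : r 1 (f ⟨g, hgH⟩)
          · have hb : ε g = true := by rw [hεg, if_pos hr]
            rw [hb, cond_true] at hxeq; subst hxeq
            exact ⟨hgH, Or.inl hr⟩
          · have hb : ε g = false := by rw [hεg, if_neg hr]
            rw [hb, cond_false] at hxeq; subst hxeq
            refine ⟨hgiH, Or.inl ?_⟩
            rw [hfinv]
            exact posinv _ htriv hr
      | mul x y hx hy ihx ihy =>
        obtain ⟨hxH, ihx⟩ := ihx
        obtain ⟨hyH, ihy⟩ := ihy
        have hxyH : x * y ∈ H := mul_mem hxH hyH
        have hfxy : f ⟨x * y, hxyH⟩ = f ⟨x, hxH⟩ * f ⟨y, hyH⟩ := by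
          rw [← map_mul]; rfl
        refine ⟨hxyH, ?_⟩
        rcases ihx with hpx | ⟨htx, hcx⟩
        · rcases ihy with hpy | ⟨hty, hcy⟩
          · exact Or.inl (by rw [hfxy]; exact posmul _ _ hpx hpy)
          · exact Or.inl (by rw [hfxy, hty, mul_one]; exact hpx)
        · rcases ihy with hpy | ⟨hty, hcy⟩
          · exact Or.inl (by rw [hfxy, htx, one_mul]; exact hpy)
          · exact Or.inr ⟨by rw [hfxy, htx, hty, mul_one], mul_mem hcx hcy⟩
    obtain ⟨h1H, hdisj⟩ := key 1 hmem
    have hone : f ⟨1, h1H⟩ = 1 := by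
      have : (⟨1, h1H⟩ : H) = 1 := rfl
      rw [this, map_one]
    rcases hdisj with hp | ⟨_, hc⟩
    · rw [hone] at hp; exact hsto.irrefl 1 hp
    · exact hε₁ hc

end Aux

theorem exists_good_global {G : Type u} [Group G]
    (hloc : ∀ S : Finset G, (1 : G) ∉ S → ∃ ε : G → Bool, Good ε S) :
    ∃ ε : G → Bool, ∀ S : Finset G, (1 : G) ∉ S → Good ε S := by
  classical
  let I := {S : Finset G // (1 : G) ∉ S}
  haveI hInonempty : Nonempty I := ⟨⟨∅, by simp⟩⟩
  let B : I → Filter I := fun S => Filter.principal {T | S.1 ⊆ T.1}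
  have hdir : Directed (· ≥ ·) B := by
    intro S S'
    refine ⟨⟨S.1 ∪ S'.1, ?_⟩, ?_, ?_⟩
    · simp only [Finset.mem_union, not_or]
      exact ⟨S.2, S'.2⟩
    · exact Filter.principal_mono.mpr
        (fun T hT => Finset.Subset.trans Finset.subset_union_left hT)
    · exact Filter.principal_mono.mpr
        (fun T hT => Finset.Subset.trans Finset.subset_union_right hT)
  haveI hBne : ∀ S : I, Filter.NeBot (B S) := by
    intro S
    rw [Filter.principal_neBot_iff]
    exact ⟨S, Finset.Subset.refl _⟩
  have hFne : Filter.NeBot (⨅ S, B S) := Filter.iInf_neBot_of_directed hdir hBne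
  let U : Ultrafilter I := @Ultrafilter.of _ _ hFne
  have hU : (U : Filter I) ≤ ⨅ S, B S := Ultrafilter.of_le _
  have hBU : ∀ S : I, {T : I | S.1 ⊆ T.1} ∈ U := by
    intro S
    exact hU (Filter.mem_iInf_of_mem S (Filter.mem_principal_self _))
  choose εT hεT using fun T : I => hloc T.1 T.2
  set ε : G → Bool := fun g => if {T : I | εT T g = true} ∈ U then true else false with hε
  have hagree : ∀ g : G, {T : I | εT T g = ε g} ∈ U := by
    intro g
    by_cases hg : {T : I | εT T g = true} ∈ U
    · have h1 : ε g = true := if_pos hg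
      rw [h1]; exact hg
    · have h1 : ε g = false := if_neg hg
      have h2 : {T : I | εT T g = true}ᶜ ∈ U := Ultrafilter.compl_mem_iff_notMem.mpr hg
      have h3 : {T : I | εT T g = ε g} = {T : I | εT T g = true}ᶜ := by
        ext T
        simp only [Set.mem_setOf_eq, Set.mem_compl_iff, h1, Bool.not_eq_true]
      rw [h3]; exact h2
  refine ⟨ε, ?_⟩
  intro S hS
  have h1 : {T : I | (⟨S, hS⟩ : I).1 ⊆ T.1} ∈ U := hBU _
  have h2 : {T : I | ∀ g ∈ S, εT T g = ε g} ∈ U := by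
    have heq : {T : I | ∀ g ∈ S, εT T g = ε g} = ⋂ g ∈ S, {T : I | εT T g = ε g} := by
      ext T; simp
    rw [heq]
    exact (Filter.biInter_mem S.finite_toSet).mpr (fun g _ => hagree g)
  obtain ⟨T, hT1, hT2⟩ := Filter.nonempty_of_mem (Filter.inter_mem h1 h2)
  intro hmem
  apply hεT T
  have heq : sgnSet ε S = sgnSet (εT T) S := sgnSet_congr (fun g hg => (hT2 g hg).symm)
  rw [heq] at hmem
  exact Subsemigroup.closure_mono (sgnSet_mono hT1) hmem

/-- Burns–Hale: a group `G` is left-orderable iff every nontrivial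
finitely generated subgroup of `G` admits a nontrivial homomorphism to some
left-orderable group. -/
theorem burns_hale {G : Type u} [Group G] :
    LeftOrderable G ↔
      ∀ H : Subgroup G, H.FG → H ≠ ⊥ →
        ∃ (L : Type u) (_ : Group L), LeftOrderable L ∧
          ∃ f : H →* L, ∃ h : H, f h ≠ 1 := by
  constructor
  · rintro hLO H _ hne
    obtain ⟨a, ha⟩ := Subgroup.ne_bot_iff_exists_ne_one.mp hne
    refine ⟨G, ‹Group G›, hLO, H.subtype, a, ?_⟩
    intro h
    exact ha (Subtype.ext h)
  · intro hyp
    classical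
    obtain ⟨ε, hgood⟩ := exists_good_global (exists_good hyp)
    set pos : G → Prop := fun g => g ≠ 1 ∧ ε g = true with hpos
    have notboth : ∀ g : G, pos g → pos g⁻¹ → False := by
      rintro g ⟨hg1, hg2⟩ ⟨hi1, hi2⟩
      have h1S : (1 : G) ∉ ({g, g⁻¹} : Finset G) := by
        simp only [Finset.mem_insert, Finset.mem_singleton, not_or]
        exact ⟨fun h => hg1 h.symm, fun h => hi1 h.symm⟩
      apply hgood {g, g⁻¹} h1S
      have w1 : g ∈ sgnSet ε {g, g⁻¹} := ⟨g, by simp, by simp [hg2]⟩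
      have w2 : g⁻¹ ∈ sgnSet ε {g, g⁻¹} := ⟨g⁻¹, by simp, by simp [hi2]⟩
      have : (1 : G) = g * g⁻¹ := by simp
      rw [this]
      exact mul_mem (Subsemigroup.subset_closure w1) (Subsemigroup.subset_closure w2)
    have posinv : ∀ g : G, g ≠ 1 → ε g = false → pos g⁻¹ := by
      intro g hg1 hgf
      refine ⟨inv_ne_one.mpr hg1, ?_⟩
      cases hb : ε g⁻¹ with
      | true => rfl
      | false =>
        exfalso
        have h1S : (1 : G) ∉ ({g, g⁻¹} : Finset G) := by
          simp only [Finset.mem_insert, Finset.mem_singleton, not_or]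
          exact ⟨fun h => hg1 h.symm, fun h => hg1 (inv_eq_one.mp h.symm)⟩
        apply hgood {g, g⁻¹} h1S
        have w1 : g⁻¹ ∈ sgnSet ε {g, g⁻¹} := ⟨g, by simp, by simp [hgf]⟩
        have w2 : g ∈ sgnSet ε {g, g⁻¹} := ⟨g⁻¹, by simp, by simp [hb]⟩
        have : (1 : G) = g * g⁻¹ := by simp
        rw [this]
        exact mul_mem (Subsemigroup.subset_closure w2) (Subsemigroup.subset_closure w1)
    have posmul : ∀ g h : G, pos g → pos h → pos (g * h) := by
      intro g h hg hh
      have hgh1 : g * h ≠ 1 := by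
        intro habs
        have hinv : g⁻¹ = h := inv_eq_of_mul_eq_one_right habs
        exact notboth g hg (by rw [hinv]; exact hh)
      refine ⟨hgh1, ?_⟩
      cases hb : ε (g * h) with
      | true => rfl
      | false =>
        exfalso
        have h1S : (1 : G) ∉ ({g, h, g * h} : Finset G) := by
          simp only [Finset.mem_insert, Finset.mem_singleton, not_or]
          exact ⟨fun e => hg.1 e.symm, fun e => hh.1 e.symm, fun e => hgh1 e.symm⟩
        apply hgood {g, h, g * h} h1S
        have w1 : g ∈ sgnSet ε {g, h, g * h} := ⟨g, by simp, by simp [hg.2]⟩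
        have w2 : h ∈ sgnSet ε {g, h, g * h} := ⟨h, by simp, by simp [hh.2]⟩
        have w3 : (g * h)⁻¹ ∈ sgnSet ε {g, h, g * h} := ⟨g * h, by simp, by simp [hb]⟩
        have he : (1 : G) = g * h * (g * h)⁻¹ := by group
        rw [he]
        exact mul_mem (mul_mem (Subsemigroup.subset_closure w1)
          (Subsemigroup.subset_closure w2)) (Subsemigroup.subset_closure w3)
    set r : G → G → Prop := fun a b => pos (a⁻¹ * b) with hr
    haveI h1 : IsTrichotomous G r := by
      constructor
      intro a b
      suffices hh : r a b ∨ a = b ∨ r b a by intro h₁ h₂; tauto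
      by_cases hab : a = b
      · exact Or.inr (Or.inl hab)
      · have hne : a⁻¹ * b ≠ 1 := by
          intro h; exact hab (eq_of_inv_mul_eq_one h)
        cases hb : ε (a⁻¹ * b) with
        | true => exact Or.inl ⟨hne, hb⟩
        | false =>
          refine Or.inr (Or.inr ?_)
          have h' := posinv _ hne hb
          show pos (b⁻¹ * a)
          rwa [mul_inv_rev, inv_inv] at h'
    haveI h2 : IsIrrefl G r := by
      constructor
      intro a ha
      have ha' : pos (a⁻¹ * a) := ha
      rw [inv_mul_cancel] at ha'
      exact ha'.1 rfl
    haveI h3 : IsTrans G r := by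
      constructor
      intro a b c hab hbc
      have h' := posmul _ _ hab hbc
      show pos (a⁻¹ * c)
      rwa [show (a⁻¹ * b) * (b⁻¹ * c) = a⁻¹ * c by group] at h'
    haveI h4 : IsStrictOrder G r := ⟨⟩
    refine ⟨r, ⟨⟩, ?_⟩
    intro f g h hgh
    show pos ((f * g)⁻¹ * (f * h))
    rwa [show (f * g)⁻¹ * (f * h) = g⁻¹ * h by group]
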